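/- arXiv:1105.1623 — 2 statements merged into one kernel-verified Lean document; each statement's English description precedes it below -/
import Mathlib

section
/- Let V be an inner product space over the complex numbers, let v₁, …, v_n be finitely many vectors in V, and let Φ ∈ V. Then ∑_{i=1}^{n} |⟨Φ, v_i⟩|² ≤ ‖Φ‖² · max_{1 ≤ i ≤ n} ∑_{j=1}^{n} |⟨v_i, v_j⟩|. -/
/-- **Bombieri's sieve inequality (Lemma 1).** For vectors `v₁, …, vₙ` and `Φ` in a complex
inner product space, `∑ᵢ |⟨Φ, vᵢ⟩|² ≤ ‖Φ‖² · maxᵢ ∑ⱼ |⟨vᵢ, vⱼ⟩|`. The maximum over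
`1 ≤ i ≤ n` is expressed as a supremum over `Fin n`. -/
theorem bombieri_inequality {V : Type*} [NormedAddCommGroup V] [InnerProductSpace ℂ V]
    (n : ℕ) (hn : 0 < n) (v : Fin n → V) (Φ : V) :
    ∑ i : Fin n, ‖(inner ℂ Φ (v i) : ℂ)‖ ^ 2
      ≤ ‖Φ‖ ^ 2 * ⨆ i : Fin n, ∑ j : Fin n, ‖(inner ℂ (v i) (v j) : ℂ)‖ := by
  haveI : Nonempty (Fin n) := Fin.pos_iff_nonempty.mp hn
  set a : Fin n → ℂ := fun i => inner ℂ Φ (v i) with ha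
  set b : Fin n → Fin n → ℝ := fun i j => ‖(inner ℂ (v i) (v j) : ℂ)‖ with hb
  set S : ℝ := ∑ i : Fin n, ‖a i‖ ^ 2 with hS
  set M : ℝ := ⨆ i : Fin n, ∑ j : Fin n, ‖(inner ℂ (v i) (v j) : ℂ)‖ with hM
  have hbnonneg : ∀ i j, 0 ≤ b i j := fun i j => norm_nonneg _
  have hbsymm : ∀ i j, b i j = b j i := fun i j => by
    rw [hb]; dsimp only; rw [← inner_conj_symm]; exact Complex.norm_conj _
  have hbdd : BddAbove (Set.range fun i : Fin n => ∑ j : Fin n, ‖(inner ℂ (v i) (v j) : ℂ)‖) :=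
    Set.Finite.bddAbove (Set.finite_range _)
  have hrowle : ∀ i : Fin n, ∑ j : Fin n, b i j ≤ M := fun i => le_ciSup hbdd i
  have hMnonneg : 0 ≤ M := by
    refine le_trans ?_ (hrowle (Classical.arbitrary (Fin n)))
    exact Finset.sum_nonneg fun j _ => hbnonneg _ _
  have hSnonneg : 0 ≤ S := Finset.sum_nonneg fun i _ => sq_nonneg _
  set w : V := ∑ i : Fin n, (starRingEnd ℂ (a i)) • v i with hw
  have h1 : (inner ℂ Φ w : ℂ) = (S : ℝ) := by
    rw [hw, inner_sum]
    simp only [inner_smul_right]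
    rw [hS]
    push_cast
    refine Finset.sum_congr rfl fun i _ => ?_
    have : (inner ℂ Φ (v i) : ℂ) = a i := rfl
    rw [this, ← Complex.normSq_eq_conj_mul_self, ← Complex.sq_norm]
    push_cast
    ring
  have h2 : S ≤ ‖Φ‖ * ‖w‖ := by
    calc S = ‖(inner ℂ Φ w : ℂ)‖ := by
          rw [h1, Complex.norm_of_nonneg hSnonneg]
      _ ≤ ‖Φ‖ * ‖w‖ := by exact norm_inner_le_norm Φ w
  have h3 : ‖w‖ ^ 2 ≤ S * M := by
    have hww : (‖w‖ : ℝ) ^ 2 = ‖(inner ℂ w w : ℂ)‖ := by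
      rw [inner_self_eq_norm_sq_to_K (𝕜 := ℂ)]
      simp
    rw [hww]
    have expand : (inner ℂ w w : ℂ) = ∑ i : Fin n, ∑ j : Fin n,
        (a i) * (starRingEnd ℂ (a j)) * (inner ℂ (v i) (v j) : ℂ) := by
      rw [hw, sum_inner]
      refine Finset.sum_congr rfl fun i _ => ?_
      rw [inner_sum]
      refine Finset.sum_congr rfl fun j _ => ?_
      rw [inner_smul_left, inner_smul_right]
      simp only [RingHom.id_apply, starRingEnd_self_apply, RingHomCompTriple.comp_apply,
        map_mul, Complex.conj_conj]
      ring
    calc ‖(inner ℂ w w : ℂ)‖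
        ≤ ∑ i : Fin n, ∑ j : Fin n,
            ‖a i‖ * ‖a j‖ * b i j := by
          rw [expand]
          refine le_trans (norm_sum_le _ _) (Finset.sum_le_sum fun i _ => ?_)
          refine le_trans (norm_sum_le _ _) (Finset.sum_le_sum fun j _ => ?_)
          rw [norm_mul, norm_mul, Complex.norm_conj]
      _ ≤ ∑ i : Fin n, ∑ j : Fin n,
            (‖a i‖ ^ 2 * b i j + ‖a j‖ ^ 2 * b i j) / 2 := by
          refine Finset.sum_le_sum fun i _ => Finset.sum_le_sum fun j _ => ?_
          nlinarith [sq_nonneg (‖a i‖ - ‖a j‖), hbnonneg i j]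
      _ = ∑ i : Fin n, ∑ j : Fin n, ‖a i‖ ^ 2 * b i j := by
          have hswap : ∑ i : Fin n, ∑ j : Fin n, ‖a j‖ ^ 2 * b i j
              = ∑ i : Fin n, ∑ j : Fin n, ‖a i‖ ^ 2 * b i j := by
            rw [Finset.sum_comm]
            exact Finset.sum_congr rfl fun i _ => Finset.sum_congr rfl fun j _ => by
              rw [hbsymm]
          have expand2 : (∑ i : Fin n, ∑ j : Fin n,
              (‖a i‖ ^ 2 * b i j + ‖a j‖ ^ 2 * b i j) / 2 : ℝ)
            = (∑ i : Fin n, ∑ j : Fin n, ‖a i‖ ^ 2 * b i j) / 2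
              + (∑ i : Fin n, ∑ j : Fin n, ‖a j‖ ^ 2 * b i j) / 2 := by
            simp only [add_div, Finset.sum_add_distrib, Finset.sum_div]
          rw [expand2, hswap]; ring
      _ ≤ ∑ i : Fin n, ‖a i‖ ^ 2 * M := by
          refine Finset.sum_le_sum fun i _ => ?_
          rw [← Finset.mul_sum]
          exact mul_le_mul_of_nonneg_left (hrowle i) (sq_nonneg _)
      _ = S * M := by rw [hS, Finset.sum_mul]
  have key : S * S ≤ ‖Φ‖ ^ 2 * (S * M) := by
    calc S * S ≤ (‖Φ‖ * ‖w‖) * (‖Φ‖ * ‖w‖) := mul_le_mul h2 h2 hSnonneg (by positivity)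
      _ = ‖Φ‖ ^ 2 * ‖w‖ ^ 2 := by ring
      _ ≤ ‖Φ‖ ^ 2 * (S * M) := mul_le_mul_of_nonneg_left h3 (by positivity)
  rcases eq_or_lt_of_le hSnonneg with h0 | h0
  · rw [← h0]; positivity
  · have := (mul_le_mul_iff_of_pos_right h0).mp (by linarith [key] : S * S ≤ (‖Φ‖ ^ 2 * M) * S)
    linarith
end

section
/- Let R and N be integers with 2 ≤ R and R² < N. Then there is a function g : ℕ → ℝ with the following properties: g(1) = 1; |g(n)| ≤ 1 for all n ≤ R; g(n) = 0 for all n > R; and ∑_{n ≤ N} ( ∑_{d | n} g(d) )² ≤ N/log R + R². -/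
open Finset ArithmeticFunction
open scoped ArithmeticFunction.Moebius ArithmeticFunction.zeta ArithmeticFunction.sigma Function

noncomputable section

namespace SelbergAux

/-- `v f = 1/φ(f)` if `f` is squarefree, else `0`. -/
def v (f : ℕ) : ℝ := if Squarefree f then ((f.totient : ℝ))⁻¹ else 0

lemma v_nonneg (f : ℕ) : 0 ≤ v f := by
  unfold v; split
  · positivity
  · exact le_rfl

lemma v_one : v 1 = 1 := by simp [v, squarefree_one]

lemma v_mul {m n : ℕ} (h : m.Coprime n) : v (m * n) = v m * v n := by
  unfold v
  rcases em (Squarefree m) with hm | hm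
  · rcases em (Squarefree n) with hn | hn
    · rw [if_pos ((Nat.squarefree_mul h).2 ⟨hm, hn⟩), if_pos hm, if_pos hn,
        Nat.totient_mul h, Nat.cast_mul, mul_inv]
    · rw [if_neg (fun hc => hn ((Nat.squarefree_mul h).1 hc).2), if_pos hm, if_neg hn, mul_zero]
  · rw [if_neg (fun hc => hm ((Nat.squarefree_mul h).1 hc).1), if_neg hm, zero_mul]

lemma moebius_mul_self_div_totient (f : ℕ) : (μ f : ℝ) * (μ f) / (f.totient : ℝ) = v f := by
  rcases em (Squarefree f) with hf | hf
  · have h1 : (μ f : ℤ) * (μ f) = 1 := by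
      have := moebius_sq_eq_one_of_squarefree hf; rwa [sq] at this
    have : ((μ f : ℝ)) * (μ f) = 1 := by exact_mod_cast h1
    rw [this, v, if_pos hf, one_div]
  · rw [moebius_eq_zero_of_not_squarefree hf, v, if_neg hf]
    simp


/-- `L R = ∑_{f ≤ R} μ²(f)/φ(f)`. -/
def L (R : ℕ) : ℝ := ∑ f ∈ Icc 1 R, v f

lemma one_le_L {R : ℕ} (hR : 1 ≤ R) : 1 ≤ L R :=
  calc (1:ℝ) = v 1 := v_one.symm
  _ ≤ ∑ f ∈ Icc 1 R, v f :=
      Finset.single_le_sum (fun i _ => v_nonneg i) (by simp [hR])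

lemma L_pos {R : ℕ} (hR : 1 ≤ R) : 0 < L R := lt_of_lt_of_le one_pos (one_le_L hR)

/-- Selberg's diagonalizing variables. -/
def y (R f : ℕ) : ℝ := (μ f : ℝ) / (f.totient : ℝ) / L R

/-- The Selberg weights. -/
def g (R d : ℕ) : ℝ := d * ∑ f ∈ (Icc 1 R).filter (d ∣ ·), (μ (f / d) : ℝ) * y R f

lemma g_zero (R : ℕ) : g R 0 = 0 := by simp [g]

lemma g_eq_zero_of_gt {R d : ℕ} (h : R < d) : g R d = 0 := by
  have : (Icc 1 R).filter (d ∣ ·) = ∅ := by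
    refine Finset.filter_false_of_mem ?_
    intro f hf hd
    simp only [mem_Icc] at hf
    exact absurd (le_trans (Nat.le_of_dvd (by omega) hd) hf.2) (by omega)
  simp [g, this]

lemma g_one {R : ℕ} (hR : 1 ≤ R) : g R 1 = 1 := by
  have hfil : (Icc 1 R).filter ((1:ℕ) ∣ ·) = Icc 1 R := by
    apply Finset.filter_true_of_mem; intro f _; exact one_dvd f
  have : ∀ f ∈ Icc 1 R, (μ (f / 1) : ℝ) * y R f = v f / L R := by
    intro f _
    rw [Nat.div_one, y, div_div, ← moebius_mul_self_div_totient f]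
    ring
  rw [g, hfil, Finset.sum_congr rfl this, ← Finset.sum_div]
  rw [show ∑ f ∈ Icc 1 R, v f = L R from rfl]
  have := L_pos hR
  field_simp
  norm_num


lemma sum_moebius_real (n : ℕ) :
    ∑ d ∈ n.divisors, (μ d : ℝ) = if n = 1 then 1 else 0 := by
  have h := congrArg (fun F : ArithmeticFunction ℝ => F n) (coe_moebius_mul_coe_zeta (R := ℝ))
  simp only [coe_mul_zeta_apply, one_apply] at h
  rw [← h]
  exact Finset.sum_congr rfl (fun d _ => by simp [intCoe_apply])

lemma sum_moebius_over_multiples {h f : ℕ} (hh : 0 < h) (hfh : f ∣ h) :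
    ∑ d ∈ h.divisors.filter (f ∣ ·), (μ (h / d) : ℝ) = if h = f then 1 else 0 := by
  have hf : 0 < f := Nat.pos_of_dvd_of_pos hfh hh
  have key : ∑ d ∈ h.divisors.filter (f ∣ ·), (μ (h / d) : ℝ)
      = ∑ c ∈ (h / f).divisors, (μ c : ℝ) := by
    refine Finset.sum_nbij' (fun d => h / d) (fun c => h / c) ?_ ?_ ?_ ?_ ?_
    · intro d hd
      simp only [Finset.mem_filter, Nat.mem_divisors] at hd
      obtain ⟨⟨hdh, hh0⟩, hfd⟩ := hd
      obtain ⟨m, hm⟩ := hfd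
      obtain ⟨k, hk⟩ := hdh
      have hd0 : 0 < d := Nat.pos_of_dvd_of_pos ⟨k, hk⟩ hh
      have h1 : h / d = k := by rw [hk]; exact Nat.mul_div_cancel_left _ hd0
      have h2 : h / f = m * k := by
        rw [hk, hm]; rw [mul_assoc]; exact Nat.mul_div_cancel_left _ hf
      simp only [Nat.mem_divisors]
      exact ⟨by rw [h1, h2]; exact ⟨m, by ring⟩, by
        rw [h2]; rintro hc; apply hh0; rw [hk, hm, mul_assoc, hc, mul_zero]⟩
    · intro c hc
      simp only [Nat.mem_divisors] at hc
      obtain ⟨⟨m, hm⟩, hne⟩ := hc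
      have hc0 : 0 < c :=
        Nat.pos_of_ne_zero (fun h0 => hne (by subst h0; simpa using hm))
      have hhf : h = f * (c * m) := by
        rw [← hm]; exact (Nat.mul_div_cancel' hfh).symm
      have h1 : h / c = f * m := by
        rw [hhf, show f * (c * m) = c * (f * m) by ring]
        exact Nat.mul_div_cancel_left _ hc0
      simp only [Finset.mem_filter, Nat.mem_divisors]
      refine ⟨⟨?_, by omega⟩, ?_⟩
      · rw [h1, hhf]; exact ⟨c, by ring⟩
      · rw [h1]; exact Dvd.intro m rfl
    · intro d hd
      simp only [Finset.mem_filter, Nat.mem_divisors] at hd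
      exact Nat.div_div_self hd.1.1 hd.1.2
    · intro c hc
      simp only [Nat.mem_divisors] at hc
      have : c ∣ h := hc.1.trans (Nat.div_dvd_of_dvd hfh)
      exact Nat.div_div_self this (by intro h0; apply hc.2; rw [h0] at hfh ⊢; simp_all)
    · intro d _; rfl
  rw [key, sum_moebius_real]
  congr 1
  simp only [eq_iff_iff]
  constructor
  · intro h1
    have := Nat.div_mul_cancel hfh
    rw [h1, one_mul] at this; omega
  · intro h1; rw [h1]; exact Nat.div_self hf

lemma sum_g_div_eq_y {R f : ℕ} (hf : f ∈ Icc 1 R) :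
    ∑ d ∈ (Icc 1 R).filter (f ∣ ·), g R d / d = y R f := by
  simp only [mem_Icc] at hf
  have step1 : ∀ d ∈ (Icc 1 R).filter (f ∣ ·),
      g R d / d = ∑ h ∈ (Icc 1 R).filter (d ∣ ·), (μ (h / d) : ℝ) * y R h := by
    intro d hd
    simp only [Finset.mem_filter, mem_Icc] at hd
    have hd0 : (0:ℝ) < d := by exact_mod_cast hd.1.1
    rw [g, mul_div_cancel_left₀ _ (ne_of_gt hd0)]
  rw [Finset.sum_congr rfl step1]
  rw [Finset.sum_comm' (t' := (Icc 1 R).filter (f ∣ ·))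
    (s' := fun h => h.divisors.filter (f ∣ ·)) ?_]
  · have inner : ∀ h ∈ (Icc 1 R).filter (f ∣ ·),
        ∑ d ∈ h.divisors.filter (f ∣ ·), (μ (h / d) : ℝ) * y R h
          = if h = f then y R h else 0 := by
      intro h hh
      simp only [Finset.mem_filter, mem_Icc] at hh
      rw [← Finset.sum_mul, sum_moebius_over_multiples (by omega) hh.2]
      split <;> simp
    rw [Finset.sum_congr rfl inner, Finset.sum_ite_eq' _ f (fun h => y R h),
      if_pos (by simp only [Finset.mem_filter, mem_Icc]; exact ⟨⟨hf.1, hf.2⟩, dvd_rfl⟩)]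
  · intro d h
    simp only [Finset.mem_filter, mem_Icc, Nat.mem_divisors]
    constructor
    · rintro ⟨⟨⟨h1d, hdR⟩, hfd⟩, ⟨h1h, hhR⟩, hdh⟩
      exact ⟨⟨⟨hdh, by omega⟩, hfd⟩, ⟨h1h, hhR⟩, hfd.trans hdh⟩
    · rintro ⟨⟨⟨hdh, hh0⟩, hfd⟩, ⟨h1h, hhR⟩, hfh2⟩
      have hd1 : 1 ≤ d := Nat.pos_of_dvd_of_pos hdh (by omega)
      have hdle : d ≤ h := Nat.le_of_dvd (by omega) hdh
      exact ⟨⟨⟨hd1, le_trans hdle hhR⟩, hfd⟩, ⟨h1h, hhR⟩, hdh⟩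


lemma gcd_eq_sum {R d e : ℕ} (hd : d ∈ Icc 1 R) (he : e ∈ Icc 1 R) :
    ((Nat.gcd d e : ℕ) : ℝ) = ∑ f ∈ Icc 1 R, (if f ∣ d ∧ f ∣ e then (f.totient : ℝ) else 0) := by
  simp only [mem_Icc] at hd he
  have hset : (Icc 1 R).filter (fun f => f ∣ d ∧ f ∣ e) = (Nat.gcd d e).divisors := by
    ext f
    simp only [Finset.mem_filter, mem_Icc, Nat.mem_divisors]
    constructor
    · rintro ⟨⟨h1, h2⟩, hfd, hfe⟩
      exact ⟨Nat.dvd_gcd hfd hfe, fun hc => by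
        have := Nat.eq_zero_of_gcd_eq_zero_left hc; omega⟩
    · rintro ⟨hfg, hne⟩
      have hfd := hfg.trans (Nat.gcd_dvd_left d e)
      have hfe := hfg.trans (Nat.gcd_dvd_right d e)
      have h1 : 1 ≤ f := Nat.pos_of_dvd_of_pos hfd (by omega)
      exact ⟨⟨h1, le_trans (Nat.le_of_dvd (by omega) hfd) hd.2⟩, hfd, hfe⟩
  rw [← Finset.sum_filter, hset, ← Nat.cast_sum]
  exact_mod_cast congrArg (Nat.cast : ℕ → ℝ) (Nat.sum_totient (Nat.gcd d e)).symm

lemma S_diag {R : ℕ} (hR : 1 ≤ R) :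
    ∑ d ∈ Icc 1 R, ∑ e ∈ Icc 1 R, g R d * g R e / (Nat.lcm d e : ℝ)
      = ∑ f ∈ Icc 1 R, (f.totient : ℝ) * y R f ^ 2 := by
  have step1 : ∀ d ∈ Icc 1 R, ∀ e ∈ Icc 1 R, g R d * g R e / (Nat.lcm d e : ℝ)
      = ∑ f ∈ Icc 1 R, (if f ∣ d ∧ f ∣ e then (f.totient : ℝ) * (g R d / d * (g R e / e)) else 0) := by
    intro d hd e he
    have hd1 : 1 ≤ d := (mem_Icc.mp hd).1
    have he1 : 1 ≤ e := (mem_Icc.mp he).1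
    have hlcm : (0:ℝ) < (Nat.lcm d e : ℝ) := by
      have := Nat.pos_of_ne_zero (Nat.lcm_ne_zero (by omega) (by omega) : Nat.lcm d e ≠ 0)
      exact_mod_cast this
    have hd0 : (0:ℝ) < d := by exact_mod_cast hd1
    have he0 : (0:ℝ) < e := by exact_mod_cast he1
    have hgl : ((Nat.gcd d e : ℕ) : ℝ) * (Nat.lcm d e : ℝ) = (d : ℝ) * e := by
      exact_mod_cast congrArg (Nat.cast : ℕ → ℝ) (Nat.gcd_mul_lcm d e)
    have h1 : ((Nat.gcd d e : ℕ) : ℝ) / ((d : ℝ) * e) = 1 / (Nat.lcm d e : ℝ) := by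
      rw [div_eq_div_iff (by positivity) (ne_of_gt hlcm), one_mul]
      exact hgl
    have key : g R d * g R e / (Nat.lcm d e : ℝ)
        = ((Nat.gcd d e : ℕ) : ℝ) * (g R d / d * (g R e / e)) := by
      rw [div_eq_mul_one_div (g R d * g R e), ← h1]
      ring
    rw [key, gcd_eq_sum hd he, Finset.sum_mul]
    exact Finset.sum_congr rfl fun f _ => by split <;> simp
  rw [Finset.sum_congr rfl (fun d hd => Finset.sum_congr rfl (fun e he => step1 d hd e he))]
  rw [Finset.sum_congr rfl (fun d _ => Finset.sum_comm), Finset.sum_comm]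
  refine Finset.sum_congr rfl fun f hf => ?_
  have hyf := sum_g_div_eq_y (R := R) (f := f) hf
  have inner : ∀ d ∈ Icc 1 R,
      (∑ e ∈ Icc 1 R, if f ∣ d ∧ f ∣ e then (f.totient : ℝ) * (g R d / d * (g R e / e)) else 0)
        = if f ∣ d then g R d / d * ((f.totient : ℝ) * y R f) else 0 := by
    intro d _
    by_cases hfd : f ∣ d
    · rw [if_pos hfd]
      calc (∑ e ∈ Icc 1 R, if f ∣ d ∧ f ∣ e then (f.totient : ℝ) * (g R d / d * (g R e / e)) else 0)
          = ∑ e ∈ Icc 1 R, (if f ∣ e then ((f.totient : ℝ) * (g R d / d)) * (g R e / e) else 0) := by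
            refine Finset.sum_congr rfl fun e _ => ?_
            simp [hfd, mul_assoc]
        _ = ∑ e ∈ (Icc 1 R).filter (f ∣ ·), ((f.totient : ℝ) * (g R d / d)) * (g R e / e) :=
            (Finset.sum_filter _ _).symm
        _ = ((f.totient : ℝ) * (g R d / d)) * ∑ e ∈ (Icc 1 R).filter (f ∣ ·), g R e / e :=
            (Finset.mul_sum _ _ _).symm
        _ = g R d / d * ((f.totient : ℝ) * y R f) := by rw [hyf]; ring
    · simp [hfd]
  rw [Finset.sum_congr rfl inner]
  calc (∑ d ∈ Icc 1 R, if f ∣ d then g R d / d * ((f.totient : ℝ) * y R f) else 0)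
      = ∑ d ∈ (Icc 1 R).filter (f ∣ ·), g R d / d * ((f.totient : ℝ) * y R f) :=
        (Finset.sum_filter _ _).symm
    _ = (∑ d ∈ (Icc 1 R).filter (f ∣ ·), g R d / d) * ((f.totient : ℝ) * y R f) :=
        (Finset.sum_mul _ _ _).symm
    _ = (f.totient : ℝ) * y R f ^ 2 := by rw [hyf]; ring

lemma S_value {R : ℕ} (hR : 1 ≤ R) :
    ∑ f ∈ Icc 1 R, (f.totient : ℝ) * y R f ^ 2 = 1 / L R := by
  have hL := L_pos hR
  have hterm : ∀ f ∈ Icc 1 R, (f.totient : ℝ) * y R f ^ 2 = v f / L R ^ 2 := by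
    intro f hf
    simp only [mem_Icc] at hf
    have hφ : (0:ℝ) < (f.totient : ℝ) := by
      exact_mod_cast Nat.totient_pos.mpr (by omega : 0 < f)
    rw [y, ← moebius_mul_self_div_totient f]
    field_simp
  rw [Finset.sum_congr rfl hterm, ← Finset.sum_div,
    show ∑ f ∈ Icc 1 R, v f = L R from rfl]
  field_simp


lemma divisor_sum_eq' {R n : ℕ} (hn : 1 ≤ n) :
    ∑ d ∈ n.divisors, g R d = ∑ d ∈ (Icc 1 R).filter (· ∣ n), g R d := by
  apply (Finset.sum_subset ?_ ?_).symm
  · intro d hd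
    simp only [Finset.mem_filter, mem_Icc] at hd
    exact Nat.mem_divisors.mpr ⟨hd.2, by omega⟩
  · intro d hd hnot
    simp only [Nat.mem_divisors] at hd
    rcases le_or_gt d R with hle | hlt
    · exfalso
      apply hnot
      simp only [Finset.mem_filter, mem_Icc]
      exact ⟨⟨Nat.pos_of_dvd_of_pos hd.1 (by omega), hle⟩, hd.1⟩
    · exact g_eq_zero_of_gt hlt

lemma main_sum_eq {R N : ℕ} :
    ∑ n ∈ Icc 1 N, (∑ d ∈ n.divisors, g R d) ^ 2
      = ∑ d ∈ Icc 1 R, ∑ e ∈ Icc 1 R, g R d * g R e * ((N / Nat.lcm d e : ℕ) : ℝ) := by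
  have step1 : ∀ n ∈ Icc 1 N, (∑ d ∈ n.divisors, g R d) ^ 2
      = ∑ d ∈ Icc 1 R, ∑ e ∈ Icc 1 R, (if Nat.lcm d e ∣ n then g R d * g R e else 0) := by
    intro n hn
    simp only [mem_Icc] at hn
    rw [divisor_sum_eq' hn.1, sq, Finset.sum_mul_sum]
    rw [Finset.sum_filter]
    refine Finset.sum_congr rfl fun d _ => ?_
    by_cases hdn : d ∣ n
    · rw [if_pos hdn, Finset.sum_filter]
      refine Finset.sum_congr rfl fun e _ => ?_
      by_cases hen : e ∣ n
      · rw [if_pos hen, if_pos (Nat.lcm_dvd hdn hen)]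
      · rw [if_neg hen, if_neg (fun hc => hen ((Nat.dvd_lcm_right d e).trans hc))]
    · rw [if_neg hdn]
      exact (Finset.sum_eq_zero fun e _ => by
        rw [if_neg (fun hc => hdn ((Nat.dvd_lcm_left d e).trans hc))]).symm
  rw [Finset.sum_congr rfl step1, Finset.sum_comm]
  refine Finset.sum_congr rfl fun d _ => ?_
  rw [Finset.sum_comm]
  refine Finset.sum_congr rfl fun e _ => ?_
  rw [← Finset.sum_filter, Finset.sum_const, nsmul_eq_mul]
  have hIcc : Icc 1 N = Ioc 0 N := by rw [← Finset.Icc_add_one_left_eq_Ioc]; rfl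
  rw [hIcc, Nat.Ioc_filter_dvd_card_eq_div]
  ring


/-- `v` as an arithmetic function. -/
def vAF : ArithmeticFunction ℝ := ⟨v, by simp [v, not_squarefree_zero]⟩

@[simp] lemma vAF_apply (n : ℕ) : vAF n = v n := rfl

lemma isMult_vAF : IsMultiplicative vAF := ⟨v_one, fun h => v_mul h⟩

/-- totient as a real arithmetic function. -/
def tAF : ArithmeticFunction ℝ := ⟨fun n => (n.totient : ℝ), by simp⟩

@[simp] lemma tAF_apply (n : ℕ) : tAF n = (n.totient : ℝ) := rfl

lemma isMult_tAF : IsMultiplicative tAF :=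
  ⟨by simp [Nat.totient_one], fun h => by simp [Nat.totient_mul h]⟩

lemma sum_v_divisors_mul_totient {d : ℕ} (hd : Squarefree d) :
    (∑ t ∈ d.divisors, v t) * (d.totient : ℝ) = d := by
  have hmul : IsMultiplicative ((vAF * (ζ : ArithmeticFunction ℝ)).pmul tAF) :=
    (isMult_vAF.mul isMultiplicative_zeta.natCast).pmul isMult_tAF
  have hcop : (↑d.primeFactors : Set ℕ).Pairwise (Nat.Coprime on _root_.id) := by
    intro p hp q hq hne
    exact (Nat.coprime_primes (Nat.prime_of_mem_primeFactors hp)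
      (Nat.prime_of_mem_primeFactors hq)).mpr hne
  have hprod := Nat.prod_primeFactors_of_squarefree hd
  have key := hmul.map_prod _root_.id d.primeFactors hcop
  simp only [_root_.id] at key
  rw [hprod] at key
  have hLHS : ((vAF * (ζ : ArithmeticFunction ℝ)).pmul tAF) d
      = (∑ t ∈ d.divisors, v t) * (d.totient : ℝ) := by
    rw [pmul_apply, tAF_apply, coe_mul_zeta_apply]
    simp only [vAF_apply]
  rw [hLHS] at key
  rw [key]
  have hfac : ∀ p ∈ d.primeFactors,
      ((vAF * (ζ : ArithmeticFunction ℝ)).pmul tAF) p = (p : ℝ) := by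
    intro p hp
    have hp' := Nat.prime_of_mem_primeFactors hp
    rw [pmul_apply, tAF_apply, coe_mul_zeta_apply, hp'.divisors,
      Finset.sum_pair hp'.one_lt.ne, Nat.totient_prime hp']
    simp only [vAF_apply, v_one, v, if_pos hp'.squarefree]
    have h2 : (2:ℕ) ≤ p := hp'.two_le
    have hcast : ((p - 1 : ℕ) : ℝ) = (p : ℝ) - 1 := by
      push_cast [Nat.cast_sub (by omega : 1 ≤ p)]
      ring
    rw [hcast]
    have : (p:ℝ) - 1 ≠ 0 := by
      have : (2:ℝ) ≤ (p:ℝ) := by exact_mod_cast h2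
      linarith
    rw [Nat.totient_prime hp', hcast]
    field_simp
    simp
  rw [Finset.prod_congr rfl hfac, ← Nat.cast_prod, hprod]


lemma key_injection {R d : ℕ} (hd1 : 1 ≤ d) (hdR : d ≤ R) :
    (∑ t ∈ d.divisors, v t) *
        (∑ k ∈ (Icc 1 (R / d)).filter (fun k => Nat.Coprime k d), v k) ≤ L R := by
  rw [Finset.sum_mul_sum, ← Finset.sum_product']
  set P := d.divisors ×ˢ ((Icc 1 (R / d)).filter (fun k => Nat.Coprime k d)) with hP
  have hmem : ∀ p ∈ P, p.1 ∣ d ∧ 1 ≤ p.2 ∧ p.2 ≤ R / d ∧ Nat.Coprime p.2 d := by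
    intro p hp
    simp only [hP, Finset.mem_product, Nat.mem_divisors, Finset.mem_filter, mem_Icc] at hp
    exact ⟨hp.1.1, hp.2.1.1, hp.2.1.2, hp.2.2⟩
  have hterm : ∀ p ∈ P, v p.1 * v p.2 = v (p.1 * p.2) := by
    intro p hp
    obtain ⟨h1, _, _, h4⟩ := hmem p hp
    exact (v_mul (Nat.Coprime.coprime_dvd_left h1 h4.symm)).symm
  rw [Finset.sum_congr rfl hterm]
  have hinj : Set.InjOn (fun p : ℕ × ℕ => p.1 * p.2) P := by
    intro p hp q hq heq
    simp only at heq
    obtain ⟨hp1, hp2, _, hp4⟩ := hmem p hp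
    obtain ⟨hq1, hq2, _, hq4⟩ := hmem q hq
    have key : ∀ r : ℕ × ℕ, r ∈ P → r.1 = Nat.gcd (r.1 * r.2) d := by
      intro r hr
      obtain ⟨h1, h2, _, h4⟩ := hmem r hr
      refine Nat.dvd_antisymm (Nat.dvd_gcd (dvd_mul_right _ _) h1) ?_
      have hco : (Nat.gcd (r.1 * r.2) d).Coprime r.2 :=
        ((Nat.Coprime.coprime_dvd_right (Nat.gcd_dvd_right _ _) h4).symm)
      exact hco.dvd_of_dvd_mul_right (Nat.gcd_dvd_left _ _)
    have h1 : p.1 = q.1 := by rw [key p hp, key q hq, heq]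
    have hp1pos : 0 < p.1 := Nat.pos_of_dvd_of_pos hp1 (by omega)
    have h2 : p.2 = q.2 := Nat.eq_of_mul_eq_mul_left hp1pos (by rw [← h1] at heq; exact heq)
    exact Prod.ext h1 h2
  rw [← Finset.sum_image (fun p hp q hq => hinj hp hq)]
  apply Finset.sum_le_sum_of_subset_of_nonneg
  · intro m hm
    simp only [Finset.mem_image] at hm
    obtain ⟨p, hp, hpm⟩ := hm
    subst hpm
    obtain ⟨h1, h2, h3, _⟩ := hmem p hp
    have hp1pos : 0 < p.1 := Nat.pos_of_dvd_of_pos h1 (by omega)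
    have hle : p.1 * p.2 ≤ d * (R / d) :=
      Nat.mul_le_mul (Nat.le_of_dvd (by omega) h1) h3
    have hRd : d * (R / d) ≤ R := Nat.mul_div_le R d
    simp only [mem_Icc]
    exact ⟨Nat.mul_pos hp1pos (by omega), le_trans hle hRd⟩
  · intro m _ _
    exact v_nonneg m

lemma g_abs_le {R d : ℕ} (hR : 1 ≤ R) (hd1 : 1 ≤ d) (hdR : d ≤ R) : |g R d| ≤ 1 := by
  have hL := L_pos hR
  by_cases hsq : Squarefree d
  case neg =>
    have : g R d = 0 := by
      rw [g]
      have : ∀ f ∈ (Icc 1 R).filter (d ∣ ·), (μ (f / d) : ℝ) * y R f = 0 := by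
        intro f hf
        simp only [Finset.mem_filter, mem_Icc] at hf
        have : ¬Squarefree f := fun hc => hsq (hc.squarefree_of_dvd hf.2)
        rw [y, moebius_eq_zero_of_not_squarefree this]
        simp
      rw [Finset.sum_congr rfl this]
      simp
    rw [this]; simp
  case pos =>
    have hφpos : (0:ℝ) < (d.totient : ℝ) := by
      exact_mod_cast Nat.totient_pos.mpr (by omega : 0 < d)
    -- reindex the sum defining g
    have hre : g R d = d * ∑ k ∈ Icc 1 (R / d), (μ k : ℝ) * y R (d * k) := by
      rw [g]
      congr 1
      refine Finset.sum_nbij' (fun f => f / d) (fun k => d * k) ?_ ?_ ?_ ?_ ?_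
      · intro f hf
        simp only [Finset.mem_filter, mem_Icc] at hf
        obtain ⟨⟨h1, h2⟩, hdvd⟩ := hf
        have hdf : d ≤ f := Nat.le_of_dvd (by omega) hdvd
        simp only [mem_Icc]
        exact ⟨(Nat.one_le_div_iff (by omega)).mpr hdf, Nat.div_le_div_right h2⟩
      · intro k hk
        simp only [mem_Icc] at hk
        simp only [Finset.mem_filter, mem_Icc]
        refine ⟨⟨Nat.mul_pos (by omega) (by omega), ?_⟩, Dvd.intro k rfl⟩
        calc d * k ≤ d * (R / d) := Nat.mul_le_mul_left d hk.2
          _ ≤ R := Nat.mul_div_le R d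
      · intro f hf
        simp only [Finset.mem_filter, mem_Icc] at hf
        exact Nat.mul_div_cancel' hf.2
      · intro k _
        exact Nat.mul_div_cancel_left k (by omega)
      · intro f hf
        simp only [Finset.mem_filter, mem_Icc] at hf
        rw [Nat.mul_div_cancel' hf.2]
    -- term bound
    have hterm : ∀ k ∈ Icc 1 (R / d), |(μ k : ℝ) * y R (d * k)|
        ≤ (if Nat.Coprime k d then v k else 0) / ((d.totient : ℝ) * L R) := by
      intro k hk
      simp only [mem_Icc] at hk
      by_cases hsqk : Squarefree (d * k)
      · obtain ⟨hco, hsd, hsk⟩ := (Nat.squarefree_mul_iff).mp hsqk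
        have hkpos : 0 < k := by omega
        have hφk : (0:ℝ) < (k.totient : ℝ) := by
          exact_mod_cast Nat.totient_pos.mpr hkpos
        have hφdk : (0:ℝ) < (((d * k).totient : ℕ) : ℝ) := by
          exact_mod_cast Nat.totient_pos.mpr (Nat.mul_pos (by omega) hkpos)
        rw [if_pos hco.symm, y]
        have habsμk : |(μ k : ℝ)| = 1 := by
          exact_mod_cast congrArg (Int.cast : ℤ → ℝ) (abs_moebius_eq_one_of_squarefree hsk)
        have habsμdk : |(μ (d * k) : ℝ)| = 1 := by
          exact_mod_cast congrArg (Int.cast : ℤ → ℝ) (abs_moebius_eq_one_of_squarefree hsqk)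
        have hL' : |L R| = L R := abs_of_pos hL
        have hEq1 : |(μ k : ℝ) * ((μ (d * k) : ℝ) / (((d * k).totient : ℕ) : ℝ) / L R)|
            = 1 / (((d * k).totient : ℕ) : ℝ) / L R := by
          rw [abs_mul, abs_div, abs_div, habsμk, habsμdk, abs_of_pos hφdk, hL', one_mul]
        rw [hEq1, v, if_pos hsk, Nat.totient_mul hco, Nat.cast_mul]
        apply le_of_eq
        field_simp
      · rw [y, moebius_eq_zero_of_not_squarefree hsqk]
        simp only [Int.cast_zero, zero_div, mul_zero, abs_zero]
        apply div_nonneg ?_ (by positivity)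
        split
        · exact v_nonneg k
        · exact le_rfl
    calc |g R d| = |(d:ℝ)| * |∑ k ∈ Icc 1 (R / d), (μ k : ℝ) * y R (d * k)| := by
          rw [hre, abs_mul]
      _ ≤ (d:ℝ) * ∑ k ∈ Icc 1 (R / d), |(μ k : ℝ) * y R (d * k)| := by
          rw [abs_of_nonneg (by positivity : (0:ℝ) ≤ (d:ℝ))]
          exact mul_le_mul_of_nonneg_left (Finset.abs_sum_le_sum_abs _ _) (by positivity)
      _ ≤ (d:ℝ) * ∑ k ∈ Icc 1 (R / d),
            (if Nat.Coprime k d then v k else 0) / ((d.totient : ℝ) * L R) := by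
          apply mul_le_mul_of_nonneg_left (Finset.sum_le_sum hterm) (by positivity)
      _ = (d:ℝ) * ((∑ k ∈ (Icc 1 (R / d)).filter (fun k => Nat.Coprime k d), v k)
            / ((d.totient : ℝ) * L R)) := by
          rw [← Finset.sum_div, Finset.sum_filter]
      _ ≤ 1 := by
          rw [← sum_v_divisors_mul_totient hsq]
          set A := ∑ t ∈ d.divisors, v t
          set W := ∑ k ∈ (Icc 1 (R / d)).filter (fun k => Nat.Coprime k d), v k
          have hkey : A * W ≤ L R := key_injection hd1 hdR
          have hA : 0 ≤ A := Finset.sum_nonneg fun t _ => v_nonneg t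
          have hW : 0 ≤ W := Finset.sum_nonneg fun t _ => v_nonneg t
          have heq : A * (d.totient:ℝ) * (W / ((d.totient:ℝ) * L R)) = (A * W) / L R := by
            field_simp
          rw [heq, div_le_one hL]
          exact hkey
  -- done


/-- The radical of `n`. -/
def rad (n : ℕ) : ℕ := ∏ p ∈ n.primeFactors, p

lemma squarefree_prod_primes {s : Finset ℕ} (hs : ∀ p ∈ s, p.Prime) :
    Squarefree (∏ p ∈ s, p) := by
  induction s using Finset.induction with
  | empty => simpa using squarefree_one
  | @insert a t ha ih =>
    rw [Finset.prod_insert ha]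
    have hap := hs a (Finset.mem_insert_self a t)
    have hco : Nat.Coprime a (∏ p ∈ t, p) := by
      apply Nat.Coprime.prod_right
      intro q hq
      exact (Nat.coprime_primes hap (hs q (Finset.mem_insert_of_mem hq))).mpr
        (fun he => ha (he ▸ hq))
    exact (Nat.squarefree_mul hco).mpr
      ⟨hap.squarefree, ih (fun p hp => hs p (Finset.mem_insert_of_mem hp))⟩

lemma rad_squarefree (n : ℕ) : Squarefree (rad n) :=
  squarefree_prod_primes (fun p hp => Nat.prime_of_mem_primeFactors hp)

lemma rad_dvd (n : ℕ) : rad n ∣ n := Nat.prod_primeFactors_dvd n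

lemma rad_pos (n : ℕ) : 0 < rad n :=
  Finset.prod_pos (fun p hp => (Nat.prime_of_mem_primeFactors hp).pos)

lemma primeFactors_rad (n : ℕ) : (rad n).primeFactors = n.primeFactors :=
  Nat.primeFactors_prod (fun p hp => Nat.prime_of_mem_primeFactors hp)

lemma dvd_rad_pow {n : ℕ} (hn : n ≠ 0) : n ∣ rad n ^ n := by
  have hrad0 : rad n ≠ 0 := (rad_pos n).ne'
  rw [← Nat.factorization_le_iff_dvd hn (pow_ne_zero _ hrad0)]
  rw [Finsupp.le_def]
  intro p
  rw [Nat.factorization_pow]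
  simp only [Finsupp.smul_apply, smul_eq_mul]
  by_cases hp : p ∈ n.primeFactors
  · have hp' := Nat.prime_of_mem_primeFactors hp
    have hdvd : p ∣ rad n := Finset.dvd_prod_of_mem _ hp
    have h1 : 1 ≤ (rad n).factorization p :=
      hp'.factorization_pos_of_dvd hrad0 hdvd
    have h2 : n.factorization p ≤ n := le_of_lt (Nat.factorization_lt p hn)
    calc n.factorization p ≤ n * 1 := by omega
      _ ≤ n * (rad n).factorization p := Nat.mul_le_mul_left n h1
  · have : n.factorization p = 0 := by
      rw [← Finsupp.notMem_support_iff, Nat.support_factorization]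
      exact hp
    omega

lemma geo_sum_le (p K : ℕ) (hp : 2 ≤ p) :
    (∑ i ∈ range (K + 1), p ^ i) * (p - 1) ≤ p ^ (K + 1) := by
  induction K with
  | zero => simpa using Nat.sub_le p 1
  | succ k ih =>
    rw [Finset.sum_range_succ, add_mul]
    set a := p ^ (k + 1) with ha
    calc (∑ i ∈ range (k + 1), p ^ i) * (p - 1) + a * (p - 1)
        ≤ a + a * (p - 1) := Nat.add_le_add_right ih _
      _ = a * p := by rw [add_comm, ← Nat.mul_succ]; congr 1; omega
      _ = p ^ (k + 1 + 1) := (pow_succ p (k + 1)).symm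

lemma sigma_pow_mul_totient_le {f : ℕ} (hsq : Squarefree f) (K : ℕ) :
    ((σ 1 (f ^ K) : ℕ) : ℝ) * (f.totient : ℝ) ≤ (f : ℝ) ^ K * f := by
  have hprod := Nat.prod_primeFactors_of_squarefree hsq
  have hprimes : ∀ p ∈ f.primeFactors, p.Prime :=
    fun p hp => Nat.prime_of_mem_primeFactors hp
  have hcop : (↑f.primeFactors : Set ℕ).Pairwise (Nat.Coprime on _root_.id) := by
    intro p hp q hq hne
    exact (Nat.coprime_primes (hprimes p hp) (hprimes q hq)).mpr hne
  have hcopK : (↑f.primeFactors : Set ℕ).Pairwise (Nat.Coprime on fun p => p ^ K) := by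
    intro p hp q hq hne
    exact Nat.Coprime.pow _ _ ((Nat.coprime_primes (hprimes p hp) (hprimes q hq)).mpr hne)
  have hσ := (isMultiplicative_sigma (k := 1)).natCast (R := ℝ) |>.map_prod
    (fun p => p ^ K) f.primeFactors hcopK
  have hφ := isMult_tAF.map_prod _root_.id f.primeFactors hcop
  simp only [_root_.id] at hφ
  rw [hprod] at hφ
  rw [Finset.prod_pow, hprod] at hσ
  simp only [natCoe_apply] at hσ
  simp only [tAF_apply] at hφ
  have hLHS : ((σ 1 (f ^ K) : ℕ) : ℝ) * (f.totient : ℝ)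
      = ∏ p ∈ f.primeFactors, (((σ 1 (p ^ K) : ℕ) : ℝ) * (p.totient : ℝ)) := by
    rw [hσ, hφ, ← Finset.prod_mul_distrib]
  rw [hLHS]
  have hcastprod : ∏ p ∈ f.primeFactors, (p : ℝ) = (f : ℝ) := by
    rw [← Nat.cast_prod, hprod]
  have hRHS : (f : ℝ) ^ K * f = ∏ p ∈ f.primeFactors, (p : ℝ) ^ (K + 1) := by
    calc (f : ℝ) ^ K * f
        = (∏ p ∈ f.primeFactors, (p : ℝ)) ^ K * ∏ p ∈ f.primeFactors, (p : ℝ) := by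
          rw [hcastprod]
      _ = (∏ p ∈ f.primeFactors, (p : ℝ) ^ K) * ∏ p ∈ f.primeFactors, (p : ℝ) := by
          rw [Finset.prod_pow]
      _ = ∏ p ∈ f.primeFactors, ((p : ℝ) ^ K * p) := Finset.prod_mul_distrib.symm
      _ = ∏ p ∈ f.primeFactors, (p : ℝ) ^ (K + 1) :=
          Finset.prod_congr rfl fun p _ => (pow_succ _ _).symm
  rw [hRHS]
  apply Finset.prod_le_prod
  · intro p _
    positivity
  · intro p hp
    have hp' := hprimes p hp
    have h2 : 2 ≤ p := hp'.two_le
    have hnat : σ 1 (p ^ K) * (p - 1) ≤ p ^ (K + 1) := by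
      rw [sigma_one_apply_prime_pow hp']
      exact geo_sum_le p K h2
    rw [Nat.totient_prime hp']
    calc ((σ 1 (p ^ K) : ℕ) : ℝ) * ((p - 1 : ℕ) : ℝ)
        = ((σ 1 (p ^ K) * (p - 1) : ℕ) : ℝ) := by push_cast; ring
      _ ≤ ((p ^ (K + 1) : ℕ) : ℝ) := by exact_mod_cast hnat
      _ = (p : ℝ) ^ (K + 1) := by push_cast; ring


lemma sum_inv_divisors (n : ℕ) (hn : n ≠ 0) :
    ∑ m ∈ n.divisors, (1 / (m : ℝ)) = ((σ 1 n : ℕ) : ℝ) / n := by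
  have h := Nat.sum_div_divisors n (fun m => (1 / (m : ℝ)))
  rw [← h, sigma_one_apply, Nat.cast_sum, Finset.sum_div]
  refine Finset.sum_congr rfl fun d hd => ?_
  obtain ⟨hdvd, _⟩ := Nat.mem_divisors.mp hd
  have hd0 : 0 < d := Nat.pos_of_dvd_of_pos hdvd (Nat.pos_of_ne_zero hn)
  have hc : ((n / d : ℕ) : ℝ) = (n : ℝ) / d := by
    rw [Nat.cast_div hdvd (by exact_mod_cast hd0.ne' : (d:ℝ) ≠ 0)]
  rw [hc, one_div_div]

lemma fiber_sum_le {R f : ℕ} (hf1 : 1 ≤ f) (hfsq : Squarefree f) (hfR : f ≤ R) :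
    ∑ k ∈ (Icc 1 R).filter (fun k => rad k = f), (1 / (k : ℝ)) ≤ v f := by
  have hφpos : (0:ℝ) < (f.totient : ℝ) := by
    exact_mod_cast Nat.totient_pos.mpr (by omega : 0 < f)
  set B := (Icc 1 R).filter (fun k => rad k = f) with hB
  have hmem : ∀ k ∈ B, 1 ≤ k ∧ k ≤ R ∧ f ∣ k ∧ k ∣ f ^ R := by
    intro k hk
    simp only [hB, Finset.mem_filter, mem_Icc] at hk
    obtain ⟨⟨h1, h2⟩, h3⟩ := hk
    refine ⟨h1, h2, h3 ▸ rad_dvd k, ?_⟩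
    have hkr : k ∣ rad k ^ k := dvd_rad_pow (by omega)
    rw [h3] at hkr
    exact hkr.trans (pow_dvd_pow f h2)
  have hinj : Set.InjOn (fun k => k / f) B := by
    intro a ha b hb hab
    obtain ⟨_, _, haf, _⟩ := hmem a ha
    obtain ⟨_, _, hbf, _⟩ := hmem b hb
    simp only at hab
    rw [← Nat.mul_div_cancel' haf, ← Nat.mul_div_cancel' hbf, hab]
  have himg : B.image (fun k => k / f) ⊆ (f ^ R).divisors := by
    intro m hm
    simp only [Finset.mem_image] at hm
    obtain ⟨k, hk, hkm⟩ := hm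
    obtain ⟨h1, h2, h3, h4⟩ := hmem k hk
    subst hkm
    have hdd : k / f ∣ k := ⟨f, (Nat.div_mul_cancel h3).symm⟩
    exact Nat.mem_divisors.mpr ⟨hdd.trans h4, pow_ne_zero _ (by omega)⟩
  have hstep1 : ∑ k ∈ B, (1 / (k : ℝ))
      = ∑ m ∈ B.image (fun k => k / f), (1 / ((f * m : ℕ) : ℝ)) := by
    rw [Finset.sum_image (fun a ha b hb => hinj ha hb)]
    refine Finset.sum_congr rfl fun k hk => ?_
    rw [Nat.mul_div_cancel' (hmem k hk).2.2.1]
  rw [hstep1]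
  calc ∑ m ∈ B.image (fun k => k / f), (1 / ((f * m : ℕ) : ℝ))
      ≤ ∑ m ∈ (f ^ R).divisors, (1 / ((f * m : ℕ) : ℝ)) := by
        apply Finset.sum_le_sum_of_subset_of_nonneg himg
        intro m _ _
        positivity
    _ = (1 / (f : ℝ)) * ∑ m ∈ (f ^ R).divisors, (1 / (m : ℝ)) := by
        rw [Finset.mul_sum]
        refine Finset.sum_congr rfl fun m _ => ?_
        rw [Nat.cast_mul, div_mul_div_comm, one_mul]
    _ = (1 / (f : ℝ)) * (((σ 1 (f ^ R) : ℕ) : ℝ) / ((f ^ R : ℕ) : ℝ)) := by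
        rw [sum_inv_divisors _ (pow_ne_zero _ (by omega))]
    _ ≤ v f := by
        rw [v, if_pos hfsq, ← one_div]
        have hσφ := sigma_pow_mul_totient_le hfsq R
        have hf0 : (0:ℝ) < (f : ℝ) := by exact_mod_cast (by omega : 0 < f)
        have hfR0 : (0:ℝ) < ((f ^ R : ℕ) : ℝ) := by
          push_cast
          positivity
        rw [div_mul_div_comm, one_mul, div_le_div_iff₀ (by positivity) hφpos, one_mul]
        calc ((σ 1 (f ^ R) : ℕ) : ℝ) * (f.totient : ℝ) ≤ (f:ℝ) ^ R * f := hσφ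
          _ = (f : ℝ) * ((f ^ R : ℕ) : ℝ) := by push_cast; ring

lemma harmonic_eq (n : ℕ) : ((harmonic n : ℚ) : ℝ) = ∑ k ∈ Icc 1 n, (1 / (k : ℝ)) := by
  induction n with
  | zero => simp [harmonic]
  | succ m ih =>
    rw [harmonic_succ, Finset.sum_Icc_succ_top (by omega : 1 ≤ m + 1), ← ih]
    push_cast
    ring

lemma log_le_L {R : ℕ} (hR : 1 ≤ R) : Real.log R ≤ L R := by
  have h1 : Real.log R ≤ Real.log (R + 1) := by
    apply Real.log_le_log (by exact_mod_cast hR : (0:ℝ) < (R:ℝ))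
    push_cast
    linarith
  have h2 := log_add_one_le_harmonic R
  have h3 : ∑ k ∈ Icc 1 R, (1 / (k : ℝ)) ≤ L R := by
    have hmaps : ∀ k ∈ Icc 1 R, rad k ∈ Icc 1 R := by
      intro k hk
      simp only [mem_Icc] at hk ⊢
      have hle : rad k ≤ k := Nat.le_of_dvd (by omega) (rad_dvd k)
      exact ⟨rad_pos k, le_trans hle hk.2⟩
    rw [← Finset.sum_fiberwise_of_maps_to (g := rad) hmaps (fun k => (1 / (k : ℝ)))]
    apply Finset.sum_le_sum
    intro f hf
    by_cases hne : ((Icc 1 R).filter (fun k => rad k = f)).Nonempty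
    · obtain ⟨k0, hk0⟩ := hne
      simp only [Finset.mem_filter, mem_Icc] at hk0
      have hsq : Squarefree f := hk0.2 ▸ rad_squarefree k0
      exact fiber_sum_le (mem_Icc.mp hf).1 hsq (mem_Icc.mp hf).2
    · rw [Finset.not_nonempty_iff_eq_empty.mp hne, Finset.sum_empty]
      exact v_nonneg f
  have h4 : ((harmonic R : ℚ) : ℝ) = ∑ k ∈ Icc 1 R, (1 / (k : ℝ)) := harmonic_eq R
  push_cast at h2
  linarith

lemma nat_div_err (N l : ℕ) (hl : 0 < l) : |((N / l : ℕ) : ℝ) - (N : ℝ) / l| ≤ 1 := by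
  have hmod := Nat.div_add_mod N l
  have hmodlt : N % l < l := Nat.mod_lt _ hl
  have hl0 : (0:ℝ) < (l : ℝ) := by exact_mod_cast hl
  have hcast : (N : ℝ) = (l : ℝ) * ((N / l : ℕ) : ℝ) + ((N % l : ℕ) : ℝ) := by
    exact_mod_cast congrArg (Nat.cast : ℕ → ℝ) hmod.symm
  have h1 : (N : ℝ) / l = ((N / l : ℕ) : ℝ) + ((N % l : ℕ) : ℝ) / l := by
    rw [hcast]
    field_simp
  have h2 : (0:ℝ) ≤ ((N % l : ℕ) : ℝ) / l := by positivity
  have h3 : ((N % l : ℕ) : ℝ) / l ≤ 1 := by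
    rw [div_le_one hl0]
    exact_mod_cast hmodlt.le
  rw [h1, abs_le]
  constructor <;> linarith


lemma final_bound {R N : ℕ} (hR : 2 ≤ R) :
    ∑ n ∈ Icc 1 N, (∑ d ∈ n.divisors, g R d) ^ 2 ≤ (N : ℝ) / Real.log R + (R : ℝ) ^ 2 := by
  have hR1 : 1 ≤ R := by omega
  have hL := L_pos hR1
  have hlog : 0 < Real.log R := Real.log_pos (by exact_mod_cast hR)
  have hlogL := log_le_L hR1
  rw [main_sum_eq]
  have habs : ∀ d ∈ Icc 1 R, |g R d| ≤ (1:ℝ) := by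
    intro d hd
    simp only [mem_Icc] at hd
    exact g_abs_le hR1 hd.1 hd.2
  have key : ∀ d ∈ Icc 1 R, ∀ e ∈ Icc 1 R,
      g R d * g R e * ((N / Nat.lcm d e : ℕ) : ℝ)
        ≤ (N : ℝ) * (g R d * g R e / (Nat.lcm d e : ℝ)) + |g R d| * |g R e| := by
    intro d hd e he
    simp only [mem_Icc] at hd he
    have hl : 0 < Nat.lcm d e :=
      Nat.pos_of_ne_zero (Nat.lcm_ne_zero (by omega) (by omega))
    have herr := nat_div_err N (Nat.lcm d e) hl
    have hiden : g R d * g R e * ((N / Nat.lcm d e : ℕ) : ℝ)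
        = (N : ℝ) * (g R d * g R e / (Nat.lcm d e : ℝ))
          + g R d * g R e * (((N / Nat.lcm d e : ℕ) : ℝ) - (N : ℝ) / (Nat.lcm d e : ℝ)) := by
      ring
    rw [hiden]
    have hb : g R d * g R e * (((N / Nat.lcm d e : ℕ) : ℝ) - (N : ℝ) / (Nat.lcm d e : ℝ))
        ≤ |g R d| * |g R e| :=
      calc g R d * g R e * (((N / Nat.lcm d e : ℕ) : ℝ) - (N : ℝ) / (Nat.lcm d e : ℝ))
          ≤ |g R d * g R e * (((N / Nat.lcm d e : ℕ) : ℝ) - (N : ℝ) / (Nat.lcm d e : ℝ))| :=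
            le_abs_self _
        _ = |g R d| * |g R e| * |((N / Nat.lcm d e : ℕ) : ℝ) - (N : ℝ) / (Nat.lcm d e : ℝ)| := by
            rw [abs_mul, abs_mul]
        _ ≤ |g R d| * |g R e| * 1 :=
            mul_le_mul_of_nonneg_left herr (by positivity)
        _ = |g R d| * |g R e| := mul_one _
    linarith
  calc ∑ d ∈ Icc 1 R, ∑ e ∈ Icc 1 R, g R d * g R e * ((N / Nat.lcm d e : ℕ) : ℝ)
      ≤ ∑ d ∈ Icc 1 R, ∑ e ∈ Icc 1 R,
          ((N : ℝ) * (g R d * g R e / (Nat.lcm d e : ℝ)) + |g R d| * |g R e|) := by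
        apply Finset.sum_le_sum
        intro d hd
        exact Finset.sum_le_sum (key d hd)
    _ = (N : ℝ) * (∑ d ∈ Icc 1 R, ∑ e ∈ Icc 1 R, g R d * g R e / (Nat.lcm d e : ℝ))
          + (∑ d ∈ Icc 1 R, |g R d|) ^ 2 := by
        rw [sq, Finset.sum_mul_sum, Finset.mul_sum, ← Finset.sum_add_distrib]
        refine Finset.sum_congr rfl fun d _ => ?_
        rw [Finset.mul_sum, ← Finset.sum_add_distrib]
    _ = (N : ℝ) * (1 / L R) + (∑ d ∈ Icc 1 R, |g R d|) ^ 2 := by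
        rw [S_diag hR1, S_value hR1]
    _ ≤ (N : ℝ) / Real.log R + (R : ℝ) ^ 2 := by
        have hsum : ∑ d ∈ Icc 1 R, |g R d| ≤ (R : ℝ) := by
          calc ∑ d ∈ Icc 1 R, |g R d| ≤ ∑ _d ∈ Icc 1 R, (1:ℝ) := Finset.sum_le_sum habs
            _ = (R : ℝ) := by simp [Nat.card_Icc]
        have hsq : (∑ d ∈ Icc 1 R, |g R d|) ^ 2 ≤ (R : ℝ) ^ 2 := by
          apply pow_le_pow_left₀ (Finset.sum_nonneg fun d _ => abs_nonneg _) hsum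
        have hdiv : (N : ℝ) * (1 / L R) ≤ (N : ℝ) / Real.log R := by
          have h1 := one_div_le_one_div_of_le hlog hlogL
          calc (N : ℝ) * (1 / L R) ≤ (N : ℝ) * (1 / Real.log R) :=
                mul_le_mul_of_nonneg_left h1 (by positivity)
            _ = (N : ℝ) / Real.log R := mul_one_div _ _
        linarith

end SelbergAux

/-- **Selberg's sieve (Lemma 2).** For integers `2 ≤ R` with `R² < N` there is a function
`g` with `g(1) = 1`, `|g(n)| ≤ 1` for `n ≤ R`, `g(n) = 0` for `n > R`, and
`∑_{n ≤ N} ((1 ∗ g)(n))² ≤ N / log R + R²`. -/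
theorem selberg_sieve_weights (R N : ℕ) (hR : 2 ≤ R) (hRN : R ^ 2 < N) :
    ∃ g : ℕ → ℝ, g 1 = 1 ∧ (∀ n : ℕ, n ≤ R → |g n| ≤ 1) ∧ (∀ n : ℕ, R < n → g n = 0) ∧
      ∑ n ∈ Icc 1 N, (∑ d ∈ n.divisors, g d) ^ 2 ≤ (N : ℝ) / Real.log R + (R : ℝ) ^ 2 := by
  have hR1 : 1 ≤ R := by omega
  refine ⟨SelbergAux.g R, SelbergAux.g_one hR1, ?_, fun n hn => SelbergAux.g_eq_zero_of_gt hn,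
    SelbergAux.final_bound hR⟩
  intro n hn
  rcases Nat.eq_zero_or_pos n with rfl | hpos
  · rw [SelbergAux.g_zero]
    simp
  · exact SelbergAux.g_abs_le hR1 hpos hn
end
end
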